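/- If z and w are conjugate nonreal elements of the real quaternions ℍ, then there exists δ ∈ ℍ with δ ≠ 0, Tr(δ) = 0, and w = δ·z·δ⁻¹. -/

import Mathlib

open Quaternion

theorem conjugate_by_traceless (z w : ℍ[ℝ]) (hz : z.im ≠ 0) (hw : w.im ≠ 0)
    (h : ∃ q : ℍ[ℝ], q ≠ 0 ∧ w = q * z * q⁻¹) :
    ∃ δ : ℍ[ℝ], δ ≠ 0 ∧ δ + star δ = 0 ∧ w = δ * z * δ⁻¹ := by
  obtain ⟨q, hq, hw'⟩ := h
  by_cases hre : q.re = 0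
  · refine ⟨q, hq, ?_, hw'⟩
    rw [Quaternion.self_add_star', hre]
    norm_num
  · set c : ℍ[ℝ] := (((q * z.im).re : ℝ) : ℍ[ℝ]) - q.re • z.im with hc
    have hcz : c * z = z * c := by
      ext <;>
        simp [hc, Quaternion.re_mul, Quaternion.imI_mul, Quaternion.imJ_mul,
          Quaternion.imK_mul] <;> ring
    have hcne : c ≠ 0 := by
      intro h0
      apply hz
      have h1 := congrArg QuaternionAlgebra.imI h0
      have h2 := congrArg QuaternionAlgebra.imJ h0
      have h3 := congrArg QuaternionAlgebra.imK h0
      simp [hc] at h1 h2 h3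
      rcases h1 with h1 | h1
      · exact absurd h1 hre
      rcases h2 with h2 | h2
      · exact absurd h2 hre
      rcases h3 with h3 | h3
      · exact absurd h3 hre
      ext <;> simp [h1, h2, h3]
    refine ⟨q * c, mul_ne_zero hq hcne, ?_, ?_⟩
    · rw [Quaternion.self_add_star']
      have : (q * c).re = 0 := by
        simp [hc, Quaternion.re_mul]
        ring
      rw [this]
      norm_num
    · have key : c * z * c⁻¹ = z := by
        rw [hcz, mul_assoc, mul_inv_cancel₀ hcne, mul_one]
      rw [hw', mul_inv_rev]
      calc q * z * q⁻¹ = q * (c * z * c⁻¹) * q⁻¹ := by rw [key]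
        _ = q * c * (z * (c⁻¹ * q⁻¹)) := by simp only [mul_assoc]
        _ = q * c * z * (c⁻¹ * q⁻¹) := (mul_assoc _ _ _).symm
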